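/- Let k be a field of characteristic p > 0 and R = k[x,y]. The algebra R/(x^p, y^p) has the Weak Lefschetz Property. -/

import Mathlib

open MvPolynomial


lemma deg2 (d : Fin 2 →₀ ℕ) : d.degree = d 0 + d 1 := by
  rw [Finsupp.degree_apply, Finset.sum_subset (Finset.subset_univ d.support)
    (fun i _ hi => Finsupp.notMem_support_iff.mp hi), Fin.sum_univ_two]

/-- every monomial of an element of `span {x^p, y^p}` has `x`-exponent ≥ p or `y`-exponent ≥ p -/
lemma mem_span_coeff {k : Type*} [Field k] {p : ℕ}
    {f : MvPolynomial (Fin 2) k}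
    (hf : f ∈ Ideal.span {(X 0 : MvPolynomial (Fin 2) k) ^ p, (X 1 : MvPolynomial (Fin 2) k) ^ p})
    {m : Fin 2 →₀ ℕ} (hm : coeff m f ≠ 0) : p ≤ m 0 ∨ p ≤ m 1 := by
  rw [Ideal.mem_span_pair] at hf
  obtain ⟨u, v, rfl⟩ := hf
  by_contra hc
  push_neg at hc
  rw [coeff_add, X_pow_eq_monomial, X_pow_eq_monomial, coeff_mul_monomial',
    coeff_mul_monomial'] at hm
  rw [if_neg, if_neg] at hm
  · simp at hm
  · exact fun h => absurd (Finsupp.single_le_iff.mp h) (not_le.mpr hc.2)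
  · exact fun h => absurd (Finsupp.single_le_iff.mp h) (not_le.mpr hc.1)



/-- The dimension of the degree-`i` component of the graded algebra `R/I`, where
`R = k[x_1,...,x_r]` is standard graded: it is the image of the space of homogeneous
polynomials of degree `i` in the quotient. -/
noncomputable def hilb {k : Type*} [Field k] {σ : Type*} (I : Ideal (MvPolynomial σ k))
    (i : ℕ) : ℕ :=
  Module.finrank k ((homogeneousSubmodule σ k i).map (Ideal.Quotient.mkₐ k I).toLinearMap)

/-- Injectivity of the multiplication map `×f : [R/I]_i → [R/I]_{i + deg f}`. -/
def mulInj {k : Type*} [Field k] {σ : Type*} (I : Ideal (MvPolynomial σ k))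
    (f : MvPolynomial σ k) (i : ℕ) : Prop :=
  ∀ g ∈ homogeneousSubmodule σ k i, f * g ∈ I → g ∈ I

/-- Surjectivity of the multiplication map `×f : [R/I]_i → [R/I]_j` (with `j = i + deg f`). -/
def mulSurj {k : Type*} [Field k] {σ : Type*} (I : Ideal (MvPolynomial σ k))
    (f : MvPolynomial σ k) (i j : ℕ) : Prop :=
  ∀ g ∈ homogeneousSubmodule σ k j, ∃ h ∈ homogeneousSubmodule σ k i, g - f * h ∈ I

/-- in characteristic `p > 0` and two variables, `R/(x^p, y^p)` has the WLP. -/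
theorem stmt4 (k : Type*) [Field k] (p : ℕ) (hp : p.Prime) [CharP k p]
    (I : Ideal (MvPolynomial (Fin 2) k))
    (hI : I = Ideal.span {(X 0 : MvPolynomial (Fin 2) k) ^ p, (X 1 : MvPolynomial (Fin 2) k) ^ p}) :
    ∃ ℓ ∈ homogeneousSubmodule (Fin 2) k 1, ℓ ≠ 0 ∧
      ∀ i : ℕ, mulInj I ℓ i ∨ mulSurj I ℓ i (i + 1) := by
  subst hI
  classical
  refine ⟨X 0, (mem_homogeneousSubmodule _ _).mpr (isHomogeneous_X k 0), X_ne_zero _, fun i => ?_⟩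
  rcases lt_or_ge (i + 1) p with hlt | hge
  · -- injectivity
    have inj : ∀ g ∈ homogeneousSubmodule (Fin 2) k i,
        (X 0 : MvPolynomial (Fin 2) k) * g ∈
          Ideal.span {(X 0 : MvPolynomial (Fin 2) k) ^ p, (X 1 : MvPolynomial (Fin 2) k) ^ p} →
        g ∈ Ideal.span {(X 0 : MvPolynomial (Fin 2) k) ^ p, (X 1 : MvPolynomial (Fin 2) k) ^ p} := by
      intro g hg hmem
      rw [mem_homogeneousSubmodule] at hg
      have hz : (X 0 : MvPolynomial (Fin 2) k) * g = 0 := by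
        ext m
        rw [coeff_zero]
        by_contra hc
        have h1 := mem_span_coeff hmem hc
        have h2 : (Finsupp.weight 1) m = 1 + i := ((isHomogeneous_X k 0).mul hg) hc
        rw [Pi.one_def, ← Finsupp.degree_eq_weight_one, deg2] at h2
        have h3 := Finsupp.le_degree 0 m
        have h4 := Finsupp.le_degree 1 m
        rw [deg2] at h3 h4
        omega
      rcases mul_eq_zero.mp hz with h | h
      · exact absurd h (X_ne_zero _)
      · rw [h]; exact Ideal.zero_mem _
    exact Or.inl inj
  · -- surjectivity
    have surj : ∀ g ∈ homogeneousSubmodule (Fin 2) k (i+1),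
        ∃ h ∈ homogeneousSubmodule (Fin 2) k i, g - (X 0 : MvPolynomial (Fin 2) k) * h ∈
          Ideal.span {(X 0 : MvPolynomial (Fin 2) k) ^ p, (X 1 : MvPolynomial (Fin 2) k) ^ p} := by
      intro g hg
      rw [mem_homogeneousSubmodule] at hg
      have hdeg : ∀ m ∈ g.support, m.degree = i + 1 := by
        intro m hm
        have := hg (Finsupp.mem_support_iff.mp hm)
        rw [Pi.one_def, ← Finsupp.degree_eq_weight_one] at this
        exact this
      refine ⟨∑ m ∈ g.support.filter (fun m => 1 ≤ m 0),
        monomial (m - Finsupp.single 0 1) (coeff m g), ?_, ?_⟩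
      · rw [mem_homogeneousSubmodule]
        apply IsHomogeneous.sum
        intro m hm
        rw [Finset.mem_filter] at hm
        apply isHomogeneous_monomial
        have hd := hdeg m hm.1
        rw [deg2] at hd ⊢
        rw [Finsupp.tsub_apply, Finsupp.tsub_apply, Finsupp.single_apply, Finsupp.single_apply]
        simp only [if_pos rfl]
        norm_num
        omega
      · have hmul : (X 0 : MvPolynomial (Fin 2) k) *
            (∑ m ∈ g.support.filter (fun m => 1 ≤ m 0),
              monomial (m - Finsupp.single 0 1) (coeff m g))
            = ∑ m ∈ g.support.filter (fun m => 1 ≤ m 0), monomial m (coeff m g) := by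
          rw [Finset.mul_sum]
          apply Finset.sum_congr rfl
          intro m hm
          rw [Finset.mem_filter] at hm
          have hle : Finsupp.single (0 : Fin 2) 1 ≤ m := Finsupp.single_le_iff.mpr hm.2
          rw [show (X 0 : MvPolynomial (Fin 2) k) = monomial (Finsupp.single 0 1) 1 by
              rw [← X_pow_eq_monomial, pow_one],
            monomial_mul, one_mul, add_tsub_cancel_of_le hle]
        rw [hmul]
        have hsum := Finset.sum_filter_add_sum_filter_not g.support (fun m => 1 ≤ m 0)
          (fun m => monomial m (coeff m g))
        rw [support_sum_monomial_coeff] at hsum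
        have hsplit : g - ∑ m ∈ g.support.filter (fun m => 1 ≤ m 0), monomial m (coeff m g)
            = ∑ m ∈ g.support.filter (fun m => ¬ 1 ≤ m 0), monomial m (coeff m g) := by
          linear_combination -hsum
        rw [hsplit]
        apply Ideal.sum_mem
        intro m hm
        rw [Finset.mem_filter] at hm
        have hm1 : p ≤ m 1 := by
          have := hdeg m hm.1
          rw [deg2] at this
          omega
        have hle : Finsupp.single (1 : Fin 2) p ≤ m := Finsupp.single_le_iff.mpr hm1
        have : monomial m (coeff m g)
            = monomial (m - Finsupp.single 1 p) (coeff m g) * (X 1 : MvPolynomial (Fin 2) k) ^ p := by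
          rw [X_pow_eq_monomial, monomial_mul, mul_one, tsub_add_cancel_of_le hle]
        rw [this]
        exact Ideal.mul_mem_left _ _ (Ideal.subset_span (by simp))
    exact Or.inr surj
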